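/- For every integer d ≥ 2 there exists a constant δ > 0 (depending only on d) such that for every integer k with 1 ≤ k < d, every axis-aligned d-dimensional cube C in ℝ^d, every integer s ≥ 1, and the subdivision of C into s^d congruent axis-aligned subcubes, every k-flat intersects at most δ · s^k of the subcubes. -/

import Mathlib

open scoped Classical

noncomputable section

/-- Points of `d`-dimensional Euclidean space. -/
abbrev Pt (d : ℕ) : Type := EuclideanSpace ℝ (Fin d)

/-- Closed axis-aligned cube with lower corner `a` and side length `ℓ`. -/
def closedCube {d : ℕ} (a : Fin d → ℝ) (ℓ : ℝ) : Set (Pt d) :=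
  {x | ∀ i, a i ≤ x i ∧ x i ≤ a i + ℓ}

/-- Interior of the axis-aligned cube with lower corner `a` and side length `ℓ`. -/
def openCube {d : ℕ} (a : Fin d → ℝ) (ℓ : ℝ) : Set (Pt d) :=
  {x | ∀ i, a i < x i ∧ x i < a i + ℓ}

/-- `P` is `b`-well-separated: every axis-aligned unit cube contains at most `b` points of `P`. -/
def WellSeparated {d : ℕ} (b : ℝ) (P : Finset (Pt d)) : Prop :=
  ∀ a : Fin d → ℝ, (((↑P : Set (Pt d)) ∩ closedCube a 1).ncard : ℝ) ≤ b

/-- `P` is `b`-homogeneous: it lies in the interior of an axis-aligned cube of volume `|P|`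
and every axis-aligned unit cube contains at most `b` of its points. -/
def IsHomogeneous {d : ℕ} (b : ℝ) (P : Finset (Pt d)) : Prop :=
  (∃ a : Fin d → ℝ, (↑P : Set (Pt d)) ⊆ openCube a ((P.card : ℝ) ^ (1 / (d : ℝ)))) ∧
    WellSeparated b P

/-- `F` is a `k`-flat: a `k`-dimensional affine subspace. -/
def IsKFlat {d : ℕ} (k : ℕ) (F : AffineSubspace ℝ (Pt d)) : Prop :=
  (F : Set (Pt d)).Nonempty ∧ Module.finrank ℝ F.direction = k

/-- `F` is `m`-rich with respect to `P`: it contains at least `m` points of `P`. -/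
def IsRich {d : ℕ} (m : ℕ) (P : Finset (Pt d)) (F : AffineSubspace ℝ (Pt d)) : Prop :=
  m ≤ ((↑P : Set (Pt d)) ∩ (F : Set (Pt d))).ncard

/-- The number of distinct distances measured from `p` to the other points of `P`. -/
def distinctDists {d : ℕ} (P : Finset (Pt d)) (p : Pt d) : ℕ :=
  {r : ℝ | ∃ q ∈ P, q ≠ p ∧ dist p q = r}.ncard

/-- The (closed) subcube indexed by `ι` in the subdivision of the cube with corner `a`
and side `ℓ` into `s^d` congruent subcubes. -/
def subcube {d : ℕ} (a : Fin d → ℝ) (ℓ : ℝ) (s : ℕ) (ι : Fin d → Fin s) : Set (Pt d) :=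
  closedCube (fun i => a i + (ι i : ℝ) * (ℓ / s)) (ℓ / s)

/-- The interior of the subcube indexed by `ι`. -/
def openSubcube {d : ℕ} (a : Fin d → ℝ) (ℓ : ℝ) (s : ℕ) (ι : Fin d → Fin s) : Set (Pt d) :=
  openCube (fun i => a i + (ι i : ℝ) * (ℓ / s)) (ℓ / s)

open Module Matrix

lemma exists_good_coords {d k : ℕ} (hk : k ≤ d) (V : Submodule ℝ (Pt d))
    (hV : Module.finrank ℝ V = k) :
    ∃ S : Finset (Fin d), S.card = k ∧
      ∀ v ∈ V, ∀ i : Fin d, |v i| ≤ ∑ j ∈ S, |v j| := by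
  classical
  have w : Basis (Fin k) ℝ V := Module.finBasisOfFinrankEq ℝ V hV
  set M : Matrix (Fin d) (Fin k) ℝ := Matrix.of (fun i b => (w b : Pt d) i) with hM
  -- the linear map sending coefficients to the vector in Pt d
  set g : (Fin k → ℝ) →ₗ[ℝ] Pt d := V.subtype ∘ₗ (w.equivFun.symm : (Fin k → ℝ) →ₗ[ℝ] V) with hg
  set φ : Fin d → (Pt d →ₗ[ℝ] ℝ) := fun i =>
    (LinearMap.proj i : ((Fin d) → ℝ) →ₗ[ℝ] ℝ) ∘ₗ
      (WithLp.linearEquiv 2 ℝ ((Fin d) → ℝ) : Pt d →ₗ[ℝ] (Fin d → ℝ)) with hφdef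
  have hφ : ∀ (x : Pt d) (i : Fin d), φ i x = x i := by
    intro x i; rw [hφdef]; rfl
  have hgapp : ∀ (y : Fin k → ℝ) (i : Fin d), g y i = (M *ᵥ y) i := by
    intro y i
    have h1 : (g y : Pt d) = ∑ b, y b • (w b : Pt d) := by
      simp only [hg, LinearMap.comp_apply, LinearEquiv.coe_coe, Basis.equivFun_symm_apply,
        map_sum, _root_.map_smul]
      rfl
    rw [← hφ (g y) i, h1, map_sum]
    simp only [_root_.map_smul, hφ, smul_eq_mul]
    simp [Matrix.mulVec, dotProduct, hM, mul_comm]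
  have hginj : Function.Injective g := by
    rw [hg, LinearMap.coe_comp]
    exact V.injective_subtype.comp w.equivFun.symm.injective
  have hmve : Function.Injective M.mulVecLin := by
    intro y y' h
    apply hginj
    ext i
    have := hgapp y i
    rw [this, hgapp y' i]
    exact congrFun (h : M *ᵥ y = M *ᵥ y') i
  -- rank of M is k
  have hrank : M.rank = k := by
    rw [Matrix.rank]
    rw [LinearMap.finrank_range_of_inj hmve]
    simp
  have hspan : Submodule.span ℝ (Set.range (fun i => M i)) = ⊤ := by
    apply Submodule.eq_top_of_finrank_eq
    have := M.rank_eq_finrank_span_row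
    rw [hrank] at this
    rw [show (fun i => M i) = M.row from rfl, ← this]
    simp
  -- extract k linearly independent rows
  obtain ⟨b, hbsub, hbspan, hbind⟩ := exists_linearIndependent ℝ (Set.range (fun i => M i))
  rw [hspan] at hbspan
  have hbfin : b.Finite := hbind.setFinite
  haveI : Fintype b := hbfin.fintype
  have hbcard : b.toFinset.card = k := by
    have h1 := finrank_span_set_eq_card hbind
    rw [hbspan] at h1
    have h2 : Module.finrank ℝ (⊤ : Submodule ℝ (Fin k → ℝ)) = k := by simp
    rw [← h1, h2]
  -- an injective enumeration of rows forming an invertible submatrix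
  have q : Fin k ≃ b.toFinset := (Finset.equivFinOfCardEq hbcard).symm
  have hmem : ∀ a : Fin k, ∃ i : Fin d, M i = ((q a : Fin k → ℝ)) := by
    intro a
    exact hbsub (Set.mem_toFinset.mp (q a).2)
  set e₀ : Fin k → Fin d := fun a => (hmem a).choose with he₀def
  have he₀ : ∀ a, M (e₀ a) = ((q a : Fin k → ℝ)) := fun a => (hmem a).choose_spec
  have hrowsind : LinearIndependent ℝ (fun a => M.submatrix e₀ id a) := by
    have hq : Function.Injective (fun a : Fin k => (⟨(q a : Fin k → ℝ),
        Set.mem_toFinset.mp (q a).2⟩ : b)) := by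
      intro a a' h
      have h' : ((q a : Fin k → ℝ)) = ((q a' : Fin k → ℝ)) := congrArg (Subtype.val : b → (Fin k → ℝ)) h
      exact q.injective (Subtype.ext h')
    have h2 := hbind.comp _ hq
    have h3 : (fun a => M.submatrix e₀ id a) = fun a => ((q a : Fin k → ℝ)) :=
      funext fun a => he₀ a
    rw [h3]
    exact h2
  have hdet₀ : (M.submatrix e₀ id).det ≠ 0 := by
    have := Matrix.linearIndependent_rows_iff_isUnit.mp hrowsind
    rw [Matrix.isUnit_iff_isUnit_det] at this
    exact this.ne_zero
  -- now pick the submatrix maximizing |det|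
  obtain ⟨e, -, hemax⟩ := Finset.exists_max_image (Finset.univ : Finset (Fin k → Fin d))
    (fun e => |(M.submatrix e id).det|) ⟨e₀, Finset.mem_univ _⟩
  have hemax : ∀ e' : Fin k → Fin d, |(M.submatrix e' id).det| ≤ |(M.submatrix e id).det| :=
    fun e' => hemax e' (Finset.mem_univ _)
  have hdet : (M.submatrix e id).det ≠ 0 := by
    intro h
    apply hdet₀
    have := hemax e₀
    rw [h, abs_zero] at this
    exact abs_eq_zero.mp (le_antisymm this (abs_nonneg _))
  have heinj : Function.Injective e := by
    intro a a' h
    by_contra hne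
    apply hdet
    apply Matrix.det_zero_of_row_eq hne
    funext b
    simp [Matrix.submatrix_apply, h]
  refine ⟨Finset.univ.image e, ?_, ?_⟩
  · rw [Finset.card_image_of_injective _ heinj, Finset.card_univ, Fintype.card_fin]
  intro v hv i
  set A := M.submatrix e id with hA
  set y : Fin k → ℝ := w.equivFun ⟨v, hv⟩ with hy
  have hgy : g y = v := by
    rw [hg]
    have hsum := congrArg (Subtype.val : V → Pt d) (w.sum_repr ⟨v, hv⟩)
    simp only [hy]
    simp only [LinearMap.comp_apply, LinearEquiv.coe_coe, Basis.equivFun_symm_apply,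
      LinearEquiv.symm_apply_apply]
    rfl
  have hvy : ∀ j, v j = (M *ᵥ y) j := by
    intro j
    rw [← hgy]
    exact hgapp y j
  set r : Fin k → ℝ := fun b => M i b with hr
  set c : Fin k → ℝ := (A.det)⁻¹ • Matrix.cramer Aᵀ r with hc
  have hAc : Aᵀ *ᵥ c = r := by
    rw [hc, Matrix.mulVec_smul, Matrix.mulVec_cramer, Matrix.det_transpose, smul_smul,
      inv_mul_cancel₀ hdet, one_smul]
  have hvi : v i = ∑ a, c a * v (e a) := by
    have h1 : v i = r ⬝ᵥ y := by
      rw [hvy i]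
      rfl
    rw [h1, ← hAc, Matrix.mulVec_transpose, ← Matrix.dotProduct_mulVec]
    simp only [dotProduct]
    apply Finset.sum_congr rfl
    intro a _
    congr 1
    rw [hvy (e a)]
    rfl
  have hcle : ∀ a, |c a| ≤ 1 := by
    intro a
    have hup : A.updateRow a r = M.submatrix (Function.update e a i) id := by
      ext a' b'
      rw [Matrix.updateRow_apply]
      by_cases h : a' = a <;> simp [h, Function.update_apply, hA, hr]
    have h1 : c a = (A.det)⁻¹ * (A.updateRow a r).det := by
      rw [hc]
      simp only [Pi.smul_apply, smul_eq_mul, Matrix.cramer_apply,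
        Matrix.updateCol_transpose, Matrix.det_transpose]
    rw [h1, hup, abs_mul, abs_inv]
    calc |A.det|⁻¹ * |(M.submatrix (Function.update e a i) id).det|
        ≤ |A.det|⁻¹ * |A.det| := by
          apply mul_le_mul_of_nonneg_left (hemax _) (inv_nonneg.mpr (abs_nonneg _))
      _ = 1 := inv_mul_cancel₀ (abs_ne_zero.mpr hdet)
  rw [Finset.sum_image (fun a _ a' _ h => heinj h)]
  calc |v i| = |∑ a, c a * v (e a)| := by rw [hvi]
    _ ≤ ∑ a, |c a * v (e a)| := Finset.abs_sum_le_sum_abs _ _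
    _ ≤ ∑ a, |v (e a)| := by
      apply Finset.sum_le_sum
      intro a _
      rw [abs_mul]
      exact mul_le_of_le_one_left (abs_nonneg _) (hcle a)

/-- In the subdivision of a cube into `s^d` congruent subcubes, every `k`-flat
(`1 ≤ k < d`) intersects at most `δ · s^k` of the subcubes, with `δ` depending only on `d`. -/
theorem kflat_meets_few_subcubes (d : ℕ) (hd : 2 ≤ d) :
    ∃ δ : ℝ, 0 < δ ∧
      ∀ k : ℕ, 1 ≤ k → k < d →
        ∀ (a : Fin d → ℝ) (ℓ : ℝ), 0 < ℓ →
          ∀ s : ℕ, 1 ≤ s →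
            ∀ F : AffineSubspace ℝ (Pt d), IsKFlat k F →
              ({ι : Fin d → Fin s |
                  ((F : Set (Pt d)) ∩ subcube a ℓ s ι).Nonempty}.ncard : ℝ) ≤
                δ * (s : ℝ) ^ k := by
  classical
  refine ⟨((2 * d + 3 : ℕ) : ℝ) ^ d, by positivity, ?_⟩
  intro k hk1 hkd a ℓ hℓ s hs F hF
  obtain ⟨hFne, hFdim⟩ := hF
  obtain ⟨S, hScard, hSbound⟩ := exists_good_coords (le_of_lt hkd) F.direction hFdim
  set u : ℝ := ℓ / s with hu
  have hupos : 0 < u := div_pos hℓ (by exact_mod_cast hs)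
  set T : Set (Fin d → Fin s) :=
    {ι | ((F : Set (Pt d)) ∩ subcube a ℓ s ι).Nonempty} with hT
  rw [Set.ncard_eq_toFinset_card' T]
  set Tf : Finset (Fin d → Fin s) := T.toFinset with hTf
  set f : (Fin d → Fin s) → (S → Fin s) := fun ι j => ι j.1 with hf
  have hcard : Tf.card ≤ (2 * d + 3) ^ d * (Tf.image f).card := by
    apply Finset.card_le_mul_card_image
    intro σ hσ
    obtain ⟨ι₀, hι₀T, hι₀σ⟩ := Finset.mem_image.mp hσ
    obtain ⟨x₀, hx₀F, hx₀c⟩ := (Set.mem_toFinset.mp hι₀T)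
    have hx₀c' : ∀ i, a i + (ι₀ i : ℝ) * u ≤ x₀ i ∧ x₀ i ≤ a i + (ι₀ i : ℝ) * u + u := by
      simpa [subcube, closedCube, hu] using hx₀c
    set A : Fin d → Finset (Fin s) := fun i =>
      Finset.univ.filter (fun j : Fin s => |(j : ℝ) - (ι₀ i : ℝ)| ≤ (k : ℝ) + 1) with hAdef
    have hsub : Tf.filter (fun ι => f ι = σ) ⊆ Fintype.piFinset A := by
      intro ι hι
      rw [Finset.mem_filter] at hι
      obtain ⟨hιT, hισ⟩ := hι
      obtain ⟨x, hxF, hxc⟩ := (Set.mem_toFinset.mp hιT)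
      have hxc' : ∀ i, a i + (ι i : ℝ) * u ≤ x i ∧ x i ≤ a i + (ι i : ℝ) * u + u := by
        simpa [subcube, closedCube, hu] using hxc
      have hdir : x - x₀ ∈ F.direction := by
        have := AffineSubspace.vsub_mem_direction hxF hx₀F
        rwa [vsub_eq_sub] at this
      have hSeq : ∀ j (hj : j ∈ S), ι j = ι₀ j := by
        intro j hj
        have := congrFun (hισ.trans hι₀σ.symm) ⟨j, hj⟩
        exact this
      have hjS : ∀ j ∈ S, |x j - x₀ j| ≤ u := by
        intro j hj
        have h1 := hxc' j
        have h2 := hx₀c' j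
        rw [hSeq j hj] at h1
        rw [abs_sub_le_iff]
        constructor <;> linarith [h1.1, h1.2, h2.1, h2.2]
      rw [Fintype.mem_piFinset]
      intro i
      rw [hAdef]
      simp only [Finset.mem_filter, Finset.mem_univ, true_and]
      by_cases hiS : i ∈ S
      · rw [hSeq i hiS]
        simp
        positivity
      · have hb := hSbound (x - x₀) hdir i
        have hsumb : ∑ j ∈ S, |(x - x₀) j| ≤ (k : ℝ) * u := by
          have := Finset.sum_le_card_nsmul S (fun j => |(x - x₀) j|) u
            (fun j hj => by simp only [PiLp.sub_apply]; exact hjS j hj)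
          rw [hScard] at this
          simpa [nsmul_eq_mul] using this
        rw [PiLp.sub_apply] at hb
        have h1 : |x i - x₀ i| ≤ (k : ℝ) * u := hb.trans hsumb
        have h2 := hxc' i
        have h3 := hx₀c' i
        have h4 := abs_le.mp h1
        have habs : |((ι i : ℝ) - (ι₀ i : ℝ)) * u| ≤ ((k : ℝ) + 1) * u := by
          rw [abs_le]
          constructor
          · nlinarith [h2.1, h2.2, h3.1, h3.2, h4.1, h4.2]
          · nlinarith [h2.1, h2.2, h3.1, h3.2, h4.1, h4.2]
        rw [abs_mul, abs_of_pos hupos] at habs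
        exact le_of_mul_le_mul_right habs hupos
    have hle := Finset.card_le_card hsub
    refine hle.trans ?_
    rw [Fintype.card_piFinset]
    have hAcard : ∀ i, (A i).card ≤ 2 * d + 3 := by
      intro i
      have hinj : Set.InjOn (fun j : Fin s => (j : ℤ)) (A i) := by
        intro j1 _ j2 _ h
        have h' : ((j1 : ℕ) : ℤ) = ((j2 : ℕ) : ℤ) := h
        exact Fin.ext (by exact_mod_cast h')
      have hmaps : ∀ j ∈ A i, (j : ℤ) ∈
          Finset.Icc ((ι₀ i : ℤ) - (k + 1)) ((ι₀ i : ℤ) + (k + 1)) := by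
        intro j hj
        rw [hAdef] at hj
        simp only [Finset.mem_filter, Finset.mem_univ, true_and] at hj
        have := abs_le.mp hj
        rw [Finset.mem_Icc]
        constructor
        · have : (ι₀ i : ℝ) - ((k : ℝ) + 1) ≤ (j : ℝ) := by linarith [this.1]
          exact_mod_cast this
        · have : (j : ℝ) ≤ (ι₀ i : ℝ) + ((k : ℝ) + 1) := by linarith [this.2]
          exact_mod_cast this
      calc (A i).card ≤ (Finset.Icc ((ι₀ i : ℤ) - (k + 1)) ((ι₀ i : ℤ) + (k + 1))).card :=
            Finset.card_le_card_of_injOn _ hmaps hinj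
        _ = 2 * k + 3 := by
            rw [Int.card_Icc]
            have : (ι₀ i : ℤ) + (k + 1) + 1 - ((ι₀ i : ℤ) - (k + 1)) = 2 * k + 3 := by ring
            rw [this]
            omega
        _ ≤ 2 * d + 3 := by omega
    calc ∏ i, (A i).card ≤ ∏ _i : Fin d, (2 * d + 3) :=
          Finset.prod_le_prod' (fun i _ => hAcard i)
      _ = (2 * d + 3) ^ d := by simp [Finset.prod_const]
  have himg : (Tf.image f).card ≤ s ^ k := by
    calc (Tf.image f).card ≤ Fintype.card (S → Fin s) := Finset.card_le_univ _
      _ = s ^ k := by rw [Fintype.card_fun]; simp [hScard]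
  have hfinal : Tf.card ≤ (2 * d + 3) ^ d * s ^ k :=
    hcard.trans (Nat.mul_le_mul_left _ himg)
  calc (Tf.card : ℝ) ≤ (((2 * d + 3) ^ d * s ^ k : ℕ) : ℝ) := Nat.cast_le.mpr hfinal
    _ = ((2 * d + 3 : ℕ) : ℝ) ^ d * (s : ℝ) ^ k := by push_cast; ring
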